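/- Suppose that for every initial value C ∈ ℝ^n there exists a twice continuously differentiable solution y : V → ℝ^n on some neighborhood V of 0 of the linear system ∂y_r/∂x_u + Σ_{s=1}^n f_{rsu} y_s = 0 (for all 1 ≤ r ≤ n, 1 ≤ u ≤ k) with y(0) = C. Then the curvature functions vanish identically near 0: R_{tsuv}(x) = 0 for all 1 ≤ t,s ≤ n, 1 ≤ u,v ≤ k and all x in a neighborhood of 0. -/

import Mathlib

open Filter Finset

lemma aux_key {n k : ℕ}
    (f : Fin n → Fin n → Fin k → (Fin k → ℝ) → ℝ)
    (W : Set (Fin k → ℝ)) (hW : IsOpen W)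
    (hf : ∀ r s u, ∀ z ∈ W, DifferentiableAt ℝ (f r s u) z)
    (y : (Fin k → ℝ) → Fin n → ℝ) (hy : ContDiffOn ℝ 2 y W)
    (heq : ∀ z ∈ W, ∀ (r : Fin n) (u : Fin k),
      fderiv ℝ (fun w => y w r) z (Pi.single u 1) + ∑ s, f r s u z * y z s = 0)
    (x : Fin k → ℝ) (hx : x ∈ W) (t : Fin n) (u v : Fin k) :
    ∑ s, (fderiv ℝ (f t s v) x (Pi.single u 1) - fderiv ℝ (f t s u) x (Pi.single v 1)
          + ∑ p, f t p u x * f p s v x - ∑ p, f t p v x * f p s u x) * y x s = 0 := by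
  -- components of y are C² at points of W
  have hyC2 : ∀ (r : Fin n) (z : Fin k → ℝ), z ∈ W → ContDiffAt ℝ 2 (fun w => y w r) z := by
    intro r z hz
    exact ((ContinuousLinearMap.proj r : (Fin n → ℝ) →L[ℝ] ℝ).contDiff.contDiffAt).comp z
      (hy.contDiffAt (hW.mem_nhds hz))
  have hyD : ∀ (r : Fin n) (z : Fin k → ℝ), z ∈ W → DifferentiableAt ℝ (fun w => y w r) z :=
    fun r z hz => (hyC2 r z hz).differentiableAt two_ne_zero
  -- the equation in solved form
  have hsolve : ∀ (r : Fin n) (u : Fin k), ∀ z ∈ W,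
      fderiv ℝ (fun w => y w r) z (Pi.single u 1) = -∑ s, f r s u z * y z s := by
    intro r u z hz
    have := heq z hz r u
    linarith
  -- derivative of the RHS
  have hrhs : ∀ (r : Fin n) (a b : Fin k),
      fderiv ℝ (fun z => -∑ s, f r s a z * y z s) x (Pi.single b 1)
        = -∑ s, (fderiv ℝ (f r s a) x (Pi.single b 1) * y x s
            + f r s a x * (-∑ p, f s p b x * y x p)) := by
    intro r a b
    have hdsum : ∀ s : Fin n, s ∈ Finset.univ →
        DifferentiableAt ℝ (fun z => f r s a z * y z s) x :=
      fun s _ => (hf r s a x hx).mul (hyD s x hx)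
    rw [fderiv_fun_neg, fderiv_fun_sum hdsum]
    simp only [ContinuousLinearMap.neg_apply, ContinuousLinearMap.sum_apply]
    congr 1
    refine Finset.sum_congr rfl fun s _ => ?_
    rw [fderiv_fun_mul (hf r s a x hx) (hyD s x hx)]
    simp only [ContinuousLinearMap.add_apply, ContinuousLinearMap.smul_apply, smul_eq_mul]
    rw [hsolve s b x hx]
    ring
  -- second derivative via eventual equality
  have hmix : ∀ (a b : Fin k),
      fderiv ℝ (fderiv ℝ (fun w => y w t)) x (Pi.single b 1) (Pi.single a 1)
        = -∑ s, (fderiv ℝ (f t s a) x (Pi.single b 1) * y x s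
            + f t s a x * (-∑ p, f s p b x * y x p)) := by
    intro a b
    have hev : (fun z => fderiv ℝ (fun w => y w t) z (Pi.single a 1))
        =ᶠ[nhds x] (fun z => -∑ s, f t s a z * y z s) := by
      filter_upwards [hW.mem_nhds hx] with z hz using hsolve t a z hz
    have hDf' : DifferentiableAt ℝ (fderiv ℝ (fun w => y w t)) x :=
      ((hyC2 t x hx).fderiv_right (m := 1) le_rfl).differentiableAt one_ne_zero
    have h1 : fderiv ℝ (fun z => fderiv ℝ (fun w => y w t) z (Pi.single a 1)) x
        = fderiv ℝ (fun z => -∑ s, f t s a z * y z s) x := hev.fderiv_eq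
    have h2 : fderiv ℝ (fun z => fderiv ℝ (fun w => y w t) z (Pi.single a 1)) x (Pi.single b 1)
        = fderiv ℝ (fderiv ℝ (fun w => y w t)) x (Pi.single b 1) (Pi.single a 1) := by
      rw [fderiv_clm_apply hDf' (differentiableAt_const _)]
      simp
    rw [← h2, h1, hrhs t a b]
  have hsymm : IsSymmSndFDerivAt ℝ (fun w => y w t) x :=
    (hyC2 t x hx).isSymmSndFDerivAt (by simp)
  have key := (hsymm (Pi.single v 1) (Pi.single u 1)).symm
  rw [hmix u v, hmix v u] at key
  -- now pure algebra
  have expand : ∀ (a b : Fin k),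
      ∑ s, (f t s a x * (∑ p, f s p b x * y x p))
        = ∑ s, (∑ p, f t p a x * f p s b x) * y x s := by
    intro a b
    simp_rw [Finset.mul_sum, Finset.sum_mul]
    rw [Finset.sum_comm]
    exact Finset.sum_congr rfl fun s _ => Finset.sum_congr rfl fun p _ => by ring
  have e1 := expand u v
  have e2 := expand v u
  simp only [mul_neg, Finset.mul_sum, Finset.sum_neg_distrib, Finset.sum_add_distrib] at key
  simp_rw [Finset.mul_sum] at e1 e2
  have e3 : ∑ s, (fderiv ℝ (f t s v) x (Pi.single u 1) - fderiv ℝ (f t s u) x (Pi.single v 1)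
          + ∑ p, f t p u x * f p s v x - ∑ p, f t p v x * f p s u x) * y x s
      = (∑ s, fderiv ℝ (f t s v) x (Pi.single u 1) * y x s)
        - (∑ s, fderiv ℝ (f t s u) x (Pi.single v 1) * y x s)
        + (∑ s, (∑ p, f t p u x * f p s v x) * y x s)
        - (∑ s, (∑ p, f t p v x * f p s u x) * y x s) := by
    rw [← Finset.sum_sub_distrib, ← Finset.sum_add_distrib, ← Finset.sum_sub_distrib]
    exact Finset.sum_congr rfl fun s _ => by ring
  rw [e3]
  linarith [key, e1, e2]



/-- If for every initial value `C ∈ ℝⁿ` the linear system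
`∂y_r/∂x_u + ∑_s f_{rsu} y_s = 0` has a twice continuously differentiable solution on some
neighborhood of `0` with `y 0 = C`, then the curvature functions
`R_{tsuv} = ∂f_{tsv}/∂x_u − ∂f_{tsu}/∂x_v + ∑_p f_{tpu} f_{psv} − ∑_p f_{tpv} f_{psu}`
vanish identically on a neighborhood of `0`. -/
theorem stmt_0 (n k : ℕ) (hn : 1 ≤ n) (hk : 1 ≤ k)
    (U : Set (Fin k → ℝ)) (hUopen : IsOpen U) (hU0 : (0 : Fin k → ℝ) ∈ U)
    (f : Fin n → Fin n → Fin k → (Fin k → ℝ) → ℝ)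
    (hf : ∀ r s u, AnalyticOnNhd ℝ (f r s u) U)
    (hsol : ∀ C : Fin n → ℝ, ∃ V : Set (Fin k → ℝ), IsOpen V ∧ (0 : Fin k → ℝ) ∈ V ∧ V ⊆ U ∧
      ∃ y : (Fin k → ℝ) → Fin n → ℝ, ContDiffOn ℝ 2 y V ∧ y 0 = C ∧
        ∀ x ∈ V, ∀ (r : Fin n) (u : Fin k),
          fderiv ℝ (fun z => y z r) x (Pi.single u 1) + ∑ s, f r s u x * y x s = 0) :
    ∃ V : Set (Fin k → ℝ), IsOpen V ∧ (0 : Fin k → ℝ) ∈ V ∧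
      ∀ x ∈ V, ∀ (t s : Fin n) (u v : Fin k),
        fderiv ℝ (f t s v) x (Pi.single u 1) - fderiv ℝ (f t s u) x (Pi.single v 1)
          + ∑ p, f t p u x * f p s v x - ∑ p, f t p v x * f p s u x = 0 := by
  choose V hVopen hV0 hVU y hyC2 hy0 hyeq using fun i : Fin n => hsol (Pi.single i 1)
  set W : Set (Fin k → ℝ) := ⋂ i, V i with hWdef
  have hWopen : IsOpen W := isOpen_iInter_of_finite hVopen
  have hW0 : (0 : Fin k → ℝ) ∈ W := Set.mem_iInter.2 hV0
  have hWV : ∀ i, W ⊆ V i := fun i => Set.iInter_subset _ i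
  have hWU : W ⊆ U := (hWV ⟨0, hn⟩).trans (hVU _)
  set Ymat : (Fin k → ℝ) → Matrix (Fin n) (Fin n) ℝ :=
    fun x => Matrix.of fun s i => y i x s with hYdef
  have hYcont : ContinuousOn Ymat W := by
    apply continuousOn_pi.2; intro s; apply continuousOn_pi.2; intro i
    exact (continuous_apply s).comp_continuousOn (((hyC2 i).continuousOn).mono (hWV i))
  have hdetcont : ContinuousOn (fun x => (Ymat x).det) W :=
    (Continuous.matrix_det continuous_id).comp_continuousOn hYcont
  refine ⟨W ∩ (fun x => (Ymat x).det) ⁻¹' ({0}ᶜ),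
    hdetcont.isOpen_inter_preimage hWopen isOpen_compl_singleton, ?_, ?_⟩
  · refine ⟨hW0, ?_⟩
    have : Ymat 0 = 1 := by
      ext s i
      simp [hYdef, hy0, Matrix.one_apply, Pi.single_apply]
    simp [this]
  · rintro x ⟨hxW, hxdet⟩ t s u v
    have hdet : (Ymat x).det ≠ 0 := hxdet
    set c : Fin n → ℝ := fun s' =>
      fderiv ℝ (f t s' v) x (Pi.single u 1) - fderiv ℝ (f t s' u) x (Pi.single v 1)
        + ∑ p, f t p u x * f p s' v x - ∑ p, f t p v x * f p s' u x with hcdef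
    have hkey : ∀ i, ∑ s', c s' * y i x s' = 0 := by
      intro i
      exact aux_key f W hWopen
        (fun r s' u' z hz => ((hf r s' u') z (hWU hz)).differentiableAt)
        (y i) ((hyC2 i).mono (hWV i))
        (fun z hz r u' => hyeq i z (hWV i hz) r u') x hxW t u v
    have hvec : Matrix.vecMul c (Ymat x) = 0 := by
      funext i
      simpa [Matrix.vecMul, dotProduct, hYdef] using hkey i
    have hc0 : c = 0 := by
      have h1 : Matrix.vecMul (Matrix.vecMul c (Ymat x)) (Ymat x)⁻¹ = c := by
        rw [Matrix.vecMul_vecMul, Matrix.mul_nonsing_inv _ (isUnit_iff_ne_zero.2 hdet), Matrix.vecMul_one]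
      rw [hvec] at h1
      rw [← h1, Matrix.zero_vecMul]
    exact congrFun hc0 s
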